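/- Let A be a commutative ring, M an A-module, and suppose the A-action on M is locally finite, meaning every element m ∈ M is contained in a finite-dimensional (over the base field) A-submodule, equivalently A·m is finite-dimensional. For a maximal ideal 𝔞 of A, let M^{(𝔞)} = { m ∈ M : 𝔞^ℓ · m = 0 for some ℓ ≥ 0 }. If M is locally finite and supported on finitely many maximal ideals, then M decomposes as the internal direct sum M = ⊕_𝔞 M^{(𝔞)} over maximal ideals 𝔞 of A, and each M^{(𝔞)} is an A-submodule. -/

import Mathlib

open Submodule

section Helpers

variable {A : Type*} [CommRing A] {M : Type*} [AddCommGroup M] [Module A M]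

/-- The generalized torsion submodule attached to an ideal `J`:
elements killed by some power of `J`. -/
def genTor (A : Type*) [CommRing A] (M : Type*) [AddCommGroup M] [Module A M]
    (J : Ideal A) : Submodule A M :=
  ⨆ ℓ : ℕ, Submodule.torsionBySet A M ((J ^ ℓ : Ideal A) : Set A)

lemma torsionBySet_le_genTor (J : Ideal A) (ℓ : ℕ) :
    Submodule.torsionBySet A M ((J ^ ℓ : Ideal A) : Set A) ≤ genTor A M J :=
  le_iSup (fun ℓ : ℕ => Submodule.torsionBySet A M ((J ^ ℓ : Ideal A) : Set A)) ℓ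

lemma mem_genTor_iff {J : Ideal A} {m : M} :
    m ∈ genTor A M J ↔ ∃ ℓ : ℕ, ∀ a ∈ J ^ ℓ, a • m = 0 := by
  have hdir : Directed (· ≤ ·)
      (fun ℓ : ℕ => Submodule.torsionBySet A M ((J ^ ℓ : Ideal A) : Set A)) := by
    apply Monotone.directed_le
    intro i j hij
    exact Submodule.torsionBySet_le_torsionBySet_of_subset
      (Ideal.pow_le_pow_right hij)
  rw [genTor, Submodule.mem_iSup_of_directed _ hdir]
  constructor
  · rintro ⟨ℓ, h⟩
    exact ⟨ℓ, fun a ha => (Submodule.mem_torsionBySet_iff _ _).mp h ⟨a, ha⟩⟩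
  · rintro ⟨ℓ, h⟩
    exact ⟨ℓ, (Submodule.mem_torsionBySet_iff _ _).mpr fun a => h a a.2⟩

lemma genTor_anti {J J' : Ideal A} (h : J ≤ J') : genTor A M J' ≤ genTor A M J :=
  iSup_le fun ℓ =>
    le_trans (Submodule.torsionBySet_le_torsionBySet_of_subset
      (Ideal.pow_right_mono h ℓ)) (torsionBySet_le_genTor J ℓ)

lemma genTor_eq_zero {I K : Ideal A} (h : I ⊔ K = ⊤) {x : M}
    (hI : x ∈ genTor A M I) (hK : x ∈ genTor A M K) : x = 0 := by
  obtain ⟨ℓ, hℓ⟩ := mem_genTor_iff.mp hI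
  obtain ⟨n, hn⟩ := mem_genTor_iff.mp hK
  have hc : I ^ ℓ ⊔ K ^ n = ⊤ := by
    rw [← Ideal.isCoprime_iff_sup_eq] at h ⊢
    exact h.pow
  obtain ⟨u, hu, v, hv, huv⟩ := Submodule.mem_sup.mp
    (show (1 : A) ∈ I ^ ℓ ⊔ K ^ n by rw [hc]; trivial)
  calc x = (1 : A) • x := (one_smul A x).symm
    _ = u • x + v • x := by rw [← huv, add_smul]
    _ = 0 := by rw [hℓ u hu, hn v hv, add_zero]

lemma torsionBySet_mul_le {I K : Ideal A} (h : I ⊔ K = ⊤) :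
    Submodule.torsionBySet A M ((I * K : Ideal A) : Set A) ≤
      Submodule.torsionBySet A M (I : Set A) ⊔ Submodule.torsionBySet A M (K : Set A) := by
  intro x hx
  obtain ⟨u, hu, v, hv, huv⟩ := Submodule.mem_sup.mp
    (show (1 : A) ∈ I ⊔ K by rw [h]; trivial)
  have hx' : ∀ a ∈ (I * K : Ideal A), a • x = 0 := fun a ha =>
    (Submodule.mem_torsionBySet_iff _ _).mp hx ⟨a, ha⟩
  have h1 : v • x ∈ Submodule.torsionBySet A M (I : Set A) :=
    (Submodule.mem_torsionBySet_iff _ _).mpr fun a => by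
      rw [smul_smul]
      exact hx' _ (Ideal.mul_mem_mul a.2 hv)
  have h2 : u • x ∈ Submodule.torsionBySet A M (K : Set A) :=
    (Submodule.mem_torsionBySet_iff _ _).mpr fun a => by
      rw [smul_smul, mul_comm]
      exact hx' _ (Ideal.mul_mem_mul hu a.2)
  have hxeq : x = v • x + u • x := by
    rw [← add_smul]
    rw [add_comm] at huv
    rw [huv, one_smul]
  rw [hxeq]
  exact Submodule.add_mem_sup h1 h2

lemma torsionBySet_prod_le {ι : Type*} [DecidableEq ι] (s : Finset ι) (p : ι → Ideal A)
    (hp : (s : Set ι).Pairwise fun i j => p i ⊔ p j = ⊤) :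
    Submodule.torsionBySet A M ((∏ i ∈ s, p i : Ideal A) : Set A) ≤
      ⨆ i ∈ s, Submodule.torsionBySet A M ((p i : Ideal A) : Set A) := by
  induction s using Finset.induction_on with
  | empty =>
    intro x hx
    have : (1 : A) • x = 0 := (Submodule.mem_torsionBySet_iff _ _).mp hx
      ⟨1, by simp [Ideal.one_eq_top]⟩
    simp only [one_smul] at this
    simp [this]
  | @insert a s' ha ih =>
    rw [Finset.prod_insert ha]
    have hcop : p a ⊔ (∏ i ∈ s', p i) = ⊤ :=
      Ideal.sup_prod_eq_top fun i hi =>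
        hp (Finset.mem_insert_self a s') (Finset.mem_insert_of_mem hi)
          (fun h => ha (h ▸ hi))
    refine le_trans (torsionBySet_mul_le hcop) (sup_le ?_ ?_)
    · exact le_iSup₂_of_le a (Finset.mem_insert_self a s') le_rfl
    · refine le_trans (ih (hp.mono (by simp [Finset.coe_insert, Set.subset_insert]))) ?_
      exact iSup₂_le fun i hi =>
        le_iSup₂_of_le i (Finset.mem_insert_of_mem hi) le_rfl

lemma prod_comap_le {R S : Type*} [CommRing R] [CommRing S] (f : R →+* S)
    {ι : Type*} [DecidableEq ι] (s : Finset ι) (p : ι → Ideal S) :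
    (∏ i ∈ s, Ideal.comap f (p i)) ≤ Ideal.comap f (∏ i ∈ s, p i) := by
  induction s using Finset.induction_on with
  | empty => simp [Ideal.one_eq_top]
  | @insert a s' ha ih =>
    rw [Finset.prod_insert ha, Finset.prod_insert ha]
    refine Ideal.mul_le.mpr fun r hr t ht => ?_
    have h1 : f r ∈ p a := hr
    have h2 : f t ∈ ∏ i ∈ s', p i := ih ht
    have h3 : f (r * t) ∈ p a * ∏ i ∈ s', p i := by
      rw [map_mul]; exact Ideal.mul_mem_mul h1 h2
    exact h3

lemma prod_mono_ideal {R : Type*} [CommRing R] {ι : Type*} [DecidableEq ι] (s : Finset ι)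
    (p q : ι → Ideal R) (h : ∀ i ∈ s, p i ≤ q i) :
    (∏ i ∈ s, p i) ≤ ∏ i ∈ s, q i := by
  induction s using Finset.induction_on with
  | empty => simp
  | @insert a s' ha ih =>
    rw [Finset.prod_insert ha, Finset.prod_insert ha]
    exact Ideal.mul_mono (h a (Finset.mem_insert_self a s'))
      (ih fun i hi => h i (Finset.mem_insert_of_mem hi))

end Helpers

/-- Let `A` be a finitely generated commutative algebra over an
algebraically closed field `k`, and `M` an `A`-module whose `A`-action is locally
finite: every `m ∈ M` generates a finite-dimensional (over `k`) `A`-submodule.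
For a maximal ideal `𝔞` of `A` set `M^{(𝔞)} = {m ∈ M : 𝔞^ℓ · m = 0 for some ℓ}`.
If `M` is locally finite and supported on finitely many maximal ideals, then each
`M^{(𝔞)}` is an `A`-submodule and `M` is the internal direct sum `⊕_𝔞 M^{(𝔞)}`
over the maximal ideals of `A`. -/
theorem spectral_decomposition
    {k : Type*} [Field k] [IsAlgClosed k]
    {A : Type*} [CommRing A] [Algebra k A] [Algebra.FiniteType k A]
    [DecidableEq (MaximalSpectrum A)]
    {M : Type*} [AddCommGroup M] [Module A M] [Module k M] [IsScalarTower k A M]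
    (hlf : ∀ m : M,
      FiniteDimensional k ((Submodule.span A {m}).restrictScalars k))
    (hsupp : {𝔞 : MaximalSpectrum A |
        ∃ m : M, m ≠ 0 ∧ ∃ ℓ : ℕ, ∀ a ∈ 𝔞.asIdeal ^ ℓ, a • m = 0}.Finite) :
    ∃ N : MaximalSpectrum A → Submodule A M,
      (∀ 𝔞 : MaximalSpectrum A,
        (N 𝔞 : Set M) = {m : M | ∃ ℓ : ℕ, ∀ a ∈ 𝔞.asIdeal ^ ℓ, a • m = 0}) ∧
      DirectSum.IsInternal N := by
  classical
  refine ⟨fun 𝔞 => genTor A M 𝔞.asIdeal, fun 𝔞 => ?_, ?_⟩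
  · ext m
    simpa using (mem_genTor_iff (J := 𝔞.asIdeal) (m := m))
  rw [DirectSum.isInternal_submodule_iff_iSupIndep_and_iSup_eq_top]
  constructor
  · -- independence
    intro 𝔞
    rw [Submodule.disjoint_def]
    intro x hx1 hx2
    rw [iSup_subtype'] at hx2
    obtain ⟨t, ht⟩ := Submodule.mem_iSup_iff_exists_finset.mp hx2
    set K : Ideal A := ∏ b ∈ t, (b : {b : MaximalSpectrum A // b ≠ 𝔞}).1.asIdeal with hK
    have hxK : x ∈ genTor A M K := by
      refine (iSup₂_le fun b hb => genTor_anti ?_ : _ ≤ genTor A M K) ht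
      exact le_trans Ideal.prod_le_inf (Finset.inf_le hb)
    have hsup : 𝔞.asIdeal ⊔ K = ⊤ := by
      refine Ideal.sup_prod_eq_top fun b hb => ?_
      exact Ideal.IsMaximal.coprime_of_ne 𝔞.2 b.1.2
        (fun h => b.2 (MaximalSpectrum.ext h.symm))
    exact genTor_eq_zero hsup hx1 hxK
  · -- supremum is everything
    rw [eq_top_iff]
    intro m _
    set I : Ideal A := (Submodule.span A {m}).annihilator with hIdef
    have hIm : ∀ a : A, a ∈ I ↔ a • m = 0 := fun a =>
      Submodule.mem_annihilator_span_singleton m a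
    set R := A ⧸ I with hR
    let π : A →+* R := Ideal.Quotient.mk I
    have hπs : Function.Surjective π := Ideal.Quotient.mk_surjective
    -- R is finite-dimensional over k
    have hker : LinearMap.ker (LinearMap.toSpanSingleton A M m) = I := by
      ext a
      simp only [LinearMap.mem_ker, LinearMap.toSpanSingleton_apply, hIm]
    let g : R →ₗ[A] M :=
      Submodule.liftQ I (LinearMap.toSpanSingleton A M m) (le_of_eq hker.symm)
    have hginj : Function.Injective g :=
      LinearMap.ker_eq_bot.mp (Submodule.ker_liftQ_eq_bot' I _ hker.symm)
    have hgmem : ∀ x : R, g x ∈ (Submodule.span A {m}).restrictScalars k := by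
      intro x
      have : g x ∈ LinearMap.range (LinearMap.toSpanSingleton A M m) := by
        rw [← Submodule.range_liftQ]
        exact LinearMap.mem_range_self _ x
      rwa [Submodule.restrictScalars_mem, LinearMap.span_singleton_eq_range]
    let g' : R →ₗ[k] ((Submodule.span A {m}).restrictScalars k) :=
      LinearMap.codRestrict _ (g.restrictScalars k) hgmem
    have hfd : FiniteDimensional k R := by
      have := hlf m
      exact FiniteDimensional.of_injective g'
        (fun x y hxy => hginj (congrArg Subtype.val hxy))
    have hart : IsArtinianRing R := IsArtinianRing.of_finite k R
    obtain ⟨n, hn⟩ := IsArtinianRing.isNilpotent_jacobson_bot (R := R)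
    have hfinmax : {J : Ideal R | J.IsMaximal}.Finite :=
      IsArtinianRing.setOfPred_isMaximal_finite R
    set S : Finset (Ideal R) := hfinmax.toFinset with hS
    have hmaxS : ∀ J ∈ S, J.IsMaximal := fun J hJ => hfinmax.mem_toFinset.mp hJ
    -- the product of the maximal ideals is contained in the Jacobson radical
    have hprodJ : (∏ J ∈ S, J) ≤ Ideal.jacobson ⊥ := by
      refine le_sInf ?_
      rintro J ⟨-, hJ⟩
      exact le_trans Ideal.prod_le_inf (Finset.inf_le (hfinmax.mem_toFinset.mpr hJ))
    have hzero : (∏ J ∈ S, J ^ n) ≤ (⊥ : Ideal R) := by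
      rw [Finset.prod_pow]
      calc (∏ J ∈ S, J) ^ n ≤ (Ideal.jacobson ⊥) ^ n := Ideal.pow_right_mono hprodJ n
        _ = ⊥ := by rw [hn]; rfl
    have hcomapI : (∏ J ∈ S, (Ideal.comap π J) ^ n) ≤ I := by
      refine le_trans (prod_mono_ideal S _ _ fun J _ => Ideal.le_comap_pow π n) ?_
      refine le_trans (prod_comap_le π S fun J => J ^ n) ?_
      intro a ha
      have h0 : π a = 0 := by
        have := hzero ha
        simpa using this
      have : a ∈ RingHom.ker π := h0
      rwa [Ideal.mk_ker] at this
    -- m is killed by the product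
    have hm : m ∈ Submodule.torsionBySet A M
        ((∏ J ∈ S, (Ideal.comap π J) ^ n : Ideal A) : Set A) :=
      (Submodule.mem_torsionBySet_iff _ _).mpr fun a => (hIm _).mp (hcomapI a.2)
    have hpair : (↑S : Set (Ideal R)).Pairwise
        fun J J' => (Ideal.comap π J) ^ n ⊔ (Ideal.comap π J') ^ n = ⊤ := by
      intro J hJ J' hJ' hne
      haveI hJm : J.IsMaximal := hmaxS J hJ
      haveI hJ'm : J'.IsMaximal := hmaxS J' hJ'
      have h1 : (Ideal.comap π J).IsMaximal :=
        Ideal.comap_isMaximal_of_surjective π hπs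
      have h2 : (Ideal.comap π J').IsMaximal :=
        Ideal.comap_isMaximal_of_surjective π hπs
      have hne' : Ideal.comap π J ≠ Ideal.comap π J' := by
        intro h
        apply hne
        rw [← Ideal.map_comap_of_surjective π hπs J,
          ← Ideal.map_comap_of_surjective π hπs J', h]
      rw [← Ideal.isCoprime_iff_sup_eq]
      exact (Ideal.isCoprime_iff_sup_eq.mpr
        (Ideal.IsMaximal.coprime_of_ne h1 h2 hne')).pow
    have hmem := torsionBySet_prod_le (M := M) S (fun J => (Ideal.comap π J) ^ n) hpair hm
    refine (iSup₂_le fun J hJ => ?_ :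
      (⨆ J ∈ S, Submodule.torsionBySet A M (((Ideal.comap π J) ^ n : Ideal A) : Set A)) ≤
        ⨆ 𝔞 : MaximalSpectrum A, genTor A M 𝔞.asIdeal) hmem
    haveI hJm : J.IsMaximal := hmaxS J hJ
    have h1 : (Ideal.comap π J).IsMaximal :=
      Ideal.comap_isMaximal_of_surjective π hπs
    exact le_trans (torsionBySet_le_genTor _ n)
      (le_iSup (fun 𝔞 : MaximalSpectrum A => genTor A M 𝔞.asIdeal)
        ⟨Ideal.comap π J, h1⟩)
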